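/- Let π be an optimal coupling between p1^{n+1} and p2^{n+1} for the Kantorovich problem with Cantor ground distance, under the consistency conditions. Then for every word w of length n, Σ_{a1 ≠ a2} π(w a1, w a2) = r(w) − Σ_{a∈A} r(wa), where r(w) = min{p1^n(w), p2^n(w)} and r(wa) = min{p1^{n+1}(wa), p2^{n+1}(wa)}. -/

import Mathlib

/-- The Cantor distance on `n`-long words: `2^{-l}` where `l` is the (1-based)
index of the first position at which the words differ, and `0` if they are equal. -/
noncomputable def cantorDist {A : Type*} [DecidableEq A] {n : ℕ} (w1 w2 : Fin n → A) : ℝ :=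
  if h : w1 = w2 then 0
  else ((1 : ℝ) / 2) ^
    (((Finset.univ.filter fun k => w1 k ≠ w2 k).min'
      (by
        obtain ⟨k, hk⟩ := Function.ne_iff.mp h
        exact ⟨k, Finset.mem_filter.mpr ⟨Finset.mem_univ k, hk⟩⟩) : Fin n).1 + 1)

/-- A probability distribution on a finite type. -/
def IsDist {X : Type*} [Fintype X] (p : X → ℝ) : Prop :=
  (∀ x, 0 ≤ p x) ∧ ∑ x, p x = 1

/-- `π` is a coupling of `p` and `q`: a nonnegative joint distribution with marginals `p`, `q`. -/
def IsCoupling {X : Type*} [Fintype X] (π : X → X → ℝ) (p q : X → ℝ) : Prop :=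
  (∀ x y, 0 ≤ π x y) ∧ (∀ x, ∑ y, π x y = p x) ∧ (∀ y, ∑ x, π x y = q y)

/-- Transport cost of a plan `π` for ground cost `d`. -/
noncomputable def transportCost {X : Type*} [Fintype X] (d : X → X → ℝ) (π : X → X → ℝ) : ℝ :=
  ∑ x, ∑ y, d x y * π x y

/-- The Kantorovich (optimal transport) cost between `p` and `q` with ground cost `d`. -/
noncomputable def kantorovich {X : Type*} [Fintype X] (d : X → X → ℝ) (p q : X → ℝ) : ℝ :=
  sInf {c | ∃ π, IsCoupling π p q ∧ transportCost d π = c}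

section CantorLemmas
variable {A : Type*} [DecidableEq A] {N : ℕ}

lemma cantorDist_self (w : Fin N → A) : cantorDist w w = 0 := dif_pos rfl

lemma cantorDist_nonneg (w1 w2 : Fin N → A) : 0 ≤ cantorDist w1 w2 := by
  unfold cantorDist; split <;> positivity

lemma cantorDist_pos {w1 w2 : Fin N → A} (h : w1 ≠ w2) : 0 < cantorDist w1 w2 := by
  rw [cantorDist, dif_neg h]; positivity

lemma cantorDist_spec {w1 w2 : Fin N → A} (h : w1 ≠ w2) :
    ∃ l : Fin N, cantorDist w1 w2 = ((1:ℝ)/2) ^ (l.1 + 1) ∧ w1 l ≠ w2 l ∧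
      ∀ k : Fin N, w1 k ≠ w2 k → l ≤ k := by
  have hne : ((Finset.univ.filter fun k => w1 k ≠ w2 k) : Finset (Fin N)).Nonempty := by
    obtain ⟨k, hk⟩ := Function.ne_iff.mp h
    exact ⟨k, Finset.mem_filter.mpr ⟨Finset.mem_univ k, hk⟩⟩
  refine ⟨(Finset.univ.filter fun k => w1 k ≠ w2 k).min' hne, ?_, ?_, ?_⟩
  · rw [cantorDist, dif_neg h]
  · have := Finset.min'_mem _ hne
    exact (Finset.mem_filter.mp this).2
  · intro k hk
    exact Finset.min'_le _ k (Finset.mem_filter.mpr ⟨Finset.mem_univ k, hk⟩)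

lemma le_cantorDist {w1 w2 : Fin N → A} (k : Fin N) (h : w1 k ≠ w2 k) :
    ((1:ℝ)/2) ^ (k.1 + 1) ≤ cantorDist w1 w2 := by
  have hne : w1 ≠ w2 := fun he => h (congrFun he k)
  obtain ⟨l, hl, _, hmin⟩ := cantorDist_spec hne
  rw [hl]
  exact pow_le_pow_of_le_one (by norm_num) (by norm_num) (by
    have := hmin k h; omega)

lemma cantorDist_le_of_agree {w1 w2 : Fin N → A} {m : ℕ}
    (h : ∀ k : Fin N, k.1 < m → w1 k = w2 k) :
    cantorDist w1 w2 ≤ ((1:ℝ)/2) ^ (m + 1) := by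
  by_cases he : w1 = w2
  · rw [he, cantorDist_self]; positivity
  · obtain ⟨l, hl, hne, _⟩ := cantorDist_spec he
    rw [hl]
    refine pow_le_pow_of_le_one (by norm_num) (by norm_num) ?_
    have : ¬ l.1 < m := fun hc => hne (h l hc)
    omega

lemma cantorDist_ultra (u v w : Fin N → A) :
    cantorDist u w ≤ max (cantorDist u v) (cantorDist v w) := by
  by_cases h : u = w
  · rw [h, cantorDist_self]
    exact le_max_of_le_left (cantorDist_nonneg w v)
  · obtain ⟨l, hl, hne, _⟩ := cantorDist_spec h
    rw [hl]
    by_cases h2 : u l = v l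
    · exact le_max_of_le_right (le_cantorDist l (h2 ▸ hne))
    · exact le_max_of_le_left (le_cantorDist l h2)

end CantorLemmas

lemma sum_ind {X : Type*} [Fintype X] [DecidableEq X] (g : X → X → ℝ) (u v : X) :
    ∑ x, ∑ y, g x y * ((if x = u then (1:ℝ) else 0) * (if y = v then 1 else 0)) = g u v := by
  simp [mul_ite, ite_mul, mul_one, mul_zero, zero_mul, Finset.sum_ite_eq]

lemma swap_opt {X : Type*} [Fintype X] [DecidableEq X] (d : X → X → ℝ)
    (q1 q2 : X → ℝ) (π : X → X → ℝ) (hπ : IsCoupling π q1 q2)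
    (hopt : ∀ π', IsCoupling π' q1 q2 → transportCost d π ≤ transportCost d π')
    (u v u' v' : X) (h1 : 0 < π u v) (h2 : 0 < π u' v') :
    d u v + d u' v' ≤ d u v' + d u' v := by
  by_cases hc : u = u' ∧ v = v'
  · obtain ⟨rfl, rfl⟩ := hc; linarith
  obtain ⟨hnn, hrow, hcol⟩ := hπ
  set ε := min (π u v) (π u' v') with hε
  have hε0 : 0 < ε := lt_min h1 h2
  have hεl : ε ≤ π u v := min_le_left _ _
  have hεr : ε ≤ π u' v' := min_le_right _ _
  set f : X → X → ℝ := fun x y =>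
    (if x = u then (1:ℝ) else 0) * (if y = v' then 1 else 0)
    + (if x = u' then 1 else 0) * (if y = v then 1 else 0)
    - (if x = u then 1 else 0) * (if y = v then 1 else 0)
    - (if x = u' then 1 else 0) * (if y = v' then 1 else 0) with hf
  set π' : X → X → ℝ := fun x y => π x y + ε * f x y with hπ'
  have hcoup : IsCoupling π' q1 q2 := by
    refine ⟨?_, ?_, ?_⟩
    · intro x y
      by_cases hxu : x = u <;> by_cases hxu' : x = u' <;>
        by_cases hyv : y = v <;> by_cases hyv' : y = v' <;>
        simp only [hπ', hf, hxu, hxu', hyv, hyv', if_pos, if_neg, if_true, ite_true,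
          ite_false] <;>
        first
          | (exfalso; exact hc ⟨by rw [← hxu, hxu'], by rw [← hyv, hyv']⟩)
          | (simp_all;
             (try linarith [hnn u v', hnn u' v, hnn u v, hnn u' v', hεl, hεr, hε0.le]);
             (try exact add_nonneg (hnn _ _) (le_min (hnn _ _) (hnn _ _))))
    · intro x
      have : ∑ y, f x y = 0 := by
        simp [hf, Finset.sum_add_distrib, Finset.sum_sub_distrib, ← Finset.mul_sum,
          Finset.sum_ite_eq]
      simp only [hπ', Finset.sum_add_distrib, ← Finset.mul_sum, this, mul_zero, add_zero]
      exact hrow x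
    · intro y
      have : ∑ x, f x y = 0 := by
        simp only [hf]
        simp [Finset.sum_add_distrib, Finset.sum_sub_distrib, ite_mul, zero_mul, one_mul,
          Finset.sum_ite_eq]
      simp only [hπ', Finset.sum_add_distrib, ← Finset.mul_sum, this, mul_zero, add_zero]
      exact hcol y
  have hcost : transportCost d π' =
      transportCost d π + ε * (d u v' + d u' v - d u v - d u' v') := by
    simp only [transportCost, hπ', hf]
    have expand : ∀ x y, d x y * (π x y + ε * ((if x = u then (1:ℝ) else 0) * (if y = v' then 1 else 0)
        + (if x = u' then 1 else 0) * (if y = v then 1 else 0)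
        - (if x = u then 1 else 0) * (if y = v then 1 else 0)
        - (if x = u' then 1 else 0) * (if y = v' then 1 else 0)))
        = d x y * π x y
          + ε * (d x y * ((if x = u then (1:ℝ) else 0) * (if y = v' then 1 else 0)))
          + ε * (d x y * ((if x = u' then (1:ℝ) else 0) * (if y = v then 1 else 0)))
          - ε * (d x y * ((if x = u then (1:ℝ) else 0) * (if y = v then 1 else 0)))
          - ε * (d x y * ((if x = u' then (1:ℝ) else 0) * (if y = v' then 1 else 0))) := by
      intro x y; ring
    simp only [expand, Finset.sum_add_distrib, Finset.sum_sub_distrib, ← Finset.mul_sum]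
    rw [sum_ind d u v', sum_ind d u' v, sum_ind d u v, sum_ind d u' v']
    ring
  have := hopt π' hcoup
  rw [hcost] at this
  have hb : 0 ≤ d u v' + d u' v - d u v - d u' v' := by
    by_contra hneg
    push_neg at hneg
    nlinarith
  linarith

/-- For an optimal coupling, the off-diagonal mass within the block of a prefix `w`
equals `r(w) − Σ_a r(wa)`, where `r` denotes the pointwise minimum of the distributions. -/
theorem optimal_coupling_diag_block {A : Type*} [Fintype A] [DecidableEq A] {n : ℕ}
    (p1 p2 : (Fin n → A) → ℝ) (q1 q2 : (Fin (n + 1) → A) → ℝ)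
    (hp1 : IsDist p1) (hp2 : IsDist p2) (hq1 : IsDist q1) (hq2 : IsDist q2)
    (hc1 : ∀ w : Fin n → A, p1 w = ∑ a : A, q1 (Fin.snoc w a))
    (hc2 : ∀ w : Fin n → A, p2 w = ∑ a : A, q2 (Fin.snoc w a))
    (π : (Fin (n + 1) → A) → (Fin (n + 1) → A) → ℝ) (hπ : IsCoupling π q1 q2)
    (hopt : ∀ π', IsCoupling π' q1 q2 →
      transportCost cantorDist π ≤ transportCost cantorDist π')
    (w : Fin n → A) :
    (∑ a1 : A, ∑ a2 : A,
        if a1 ≠ a2 then π (Fin.snoc w a1) (Fin.snoc w a2) else 0) =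
      min (p1 w) (p2 w) - ∑ a : A, min (q1 (Fin.snoc w a)) (q2 (Fin.snoc w a)) := by
  classical
  have hnn := hπ.1
  have hrow := hπ.2.1
  have hcol := hπ.2.2
  have cm := swap_opt cantorDist q1 q2 π hπ hopt
  -- summation over words of length n+1 as a double sum
  have hbij : Function.Bijective
      (fun p : (Fin n → A) × A => (Fin.snoc p.1 p.2 : Fin (n+1) → A)) := by
    constructor
    · intro p q h
      have h1 : p.1 = q.1 := by
        funext k
        have := congrFun h (Fin.castSucc k)
        simpa [Fin.snoc_castSucc] using this
      have h2 : p.2 = q.2 := by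
        have := congrFun h (Fin.last n)
        simpa [Fin.snoc_last] using this
      exact Prod.ext h1 h2
    · intro y
      exact ⟨(Fin.init y, y (Fin.last n)), Fin.snoc_init_self y⟩
  have hsum : ∀ g : (Fin (n+1) → A) → ℝ,
      ∑ y, g y = ∑ w' : Fin n → A, ∑ a : A, g (Fin.snoc w' a) := by
    intro g
    rw [← Fintype.sum_bijective _ hbij (fun p => g (Fin.snoc p.1 p.2)) g (fun p => rfl),
      Fintype.sum_prod_type]
  -- distance estimates
  have hhalf : ∀ a b : A,
      cantorDist (Fin.snoc w a : Fin (n+1) → A) (Fin.snoc w b) ≤ ((1:ℝ)/2)^(n+1) := by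
    intro a b
    apply cantorDist_le_of_agree
    intro k hk
    have hk' : k = Fin.castSucc ⟨k.1, hk⟩ := by ext; simp
    rw [hk', Fin.snoc_castSucc, Fin.snoc_castSucc]
  have hfar1 : ∀ (a : A) (y : Fin (n+1) → A), Fin.init y ≠ w →
      ((1:ℝ)/2)^n ≤ cantorDist (Fin.snoc w a : Fin (n+1) → A) y := by
    intro a y hy
    obtain ⟨k, hk⟩ := Function.ne_iff.mp hy
    simp only [Fin.init] at hk
    have hne : (Fin.snoc w a : Fin (n+1) → A) (Fin.castSucc k) ≠ y (Fin.castSucc k) := by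
      rw [Fin.snoc_castSucc]; exact fun h => hk (by rw [← h])
    refine le_trans ?_ (le_cantorDist (Fin.castSucc k) hne)
    apply pow_le_pow_of_le_one (by norm_num) (by norm_num)
    have := k.isLt
    simp only [Fin.coe_castSucc]
    omega
  have hfar2 : ∀ (a : A) (y : Fin (n+1) → A), Fin.init y ≠ w →
      ((1:ℝ)/2)^n ≤ cantorDist y (Fin.snoc w a : Fin (n+1) → A) := by
    intro a y hy
    obtain ⟨k, hk⟩ := Function.ne_iff.mp hy
    simp only [Fin.init] at hk
    have hne : y (Fin.castSucc k) ≠ (Fin.snoc w a : Fin (n+1) → A) (Fin.castSucc k) := by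
      rw [Fin.snoc_castSucc]; exact hk
    refine le_trans ?_ (le_cantorDist (Fin.castSucc k) hne)
    apply pow_le_pow_of_le_one (by norm_num) (by norm_num)
    have := k.isLt
    simp only [Fin.coe_castSucc]
    omega
  -- diagonal of the optimal coupling
  have diag : ∀ u : Fin (n+1) → A, π u u = min (q1 u) (q2 u) := by
    intro u
    have h1 : π u u ≤ q1 u := by
      rw [← hrow u]
      exact Finset.single_le_sum (fun y _ => hnn u y) (Finset.mem_univ u)
    have h2 : π u u ≤ q2 u := by
      rw [← hcol u]
      exact Finset.single_le_sum (fun x _ => hnn x u) (Finset.mem_univ u)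
    refine le_antisymm (le_min h1 h2) ?_
    by_contra hlt
    push_neg at hlt
    have hl1 : π u u < q1 u := lt_of_lt_of_le hlt (min_le_left _ _)
    have hl2 : π u u < q2 u := lt_of_lt_of_le hlt (min_le_right _ _)
    have hv : ∃ v, v ≠ u ∧ 0 < π u v := by
      by_contra hno
      push_neg at hno
      have : q1 u = π u u := by
        rw [← hrow u]
        exact Finset.sum_eq_single u (fun b _ hb => le_antisymm (hno b hb) (hnn u b))
          (fun h => absurd (Finset.mem_univ u) h)
      linarith
    have hv' : ∃ v', v' ≠ u ∧ 0 < π v' u := by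
      by_contra hno
      push_neg at hno
      have : q2 u = π u u := by
        rw [← hcol u]
        exact Finset.sum_eq_single u (fun b _ hb => le_antisymm (hno b hb) (hnn b u))
          (fun h => absurd (Finset.mem_univ u) h)
      linarith
    obtain ⟨v, hvu, hvpos⟩ := hv
    obtain ⟨v', hv'u, hv'pos⟩ := hv'
    have hcm := cm u v v' u hvpos hv'pos
    rw [cantorDist_self] at hcm
    have hu := cantorDist_ultra v' u v
    have hp1' : 0 < cantorDist u v := cantorDist_pos (fun h => hvu h.symm)
    have hp2' : 0 < cantorDist v' u := cantorDist_pos hv'u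
    rcases max_cases (cantorDist v' u) (cantorDist u v) with ⟨hm, _⟩ | ⟨hm, _⟩ <;>
      rw [hm] at hu <;> linarith
  -- block mass
  set S := ∑ a1 : A, ∑ a2 : A, π (Fin.snoc w a1) (Fin.snoc w a2) with hS
  have hSle1 : S ≤ p1 w := by
    rw [hc1]
    apply Finset.sum_le_sum
    intro a1 _
    rw [← hrow (Fin.snoc w a1), hsum (π (Fin.snoc w a1))]
    exact Finset.single_le_sum
      (f := fun w' => ∑ a2, π (Fin.snoc w a1) (Fin.snoc w' a2))
      (fun w' _ => Finset.sum_nonneg fun a2 _ => hnn _ _) (Finset.mem_univ w)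
  have hS' : S = ∑ a2 : A, ∑ a1 : A, π (Fin.snoc w a1) (Fin.snoc w a2) := by
    rw [hS]; exact Finset.sum_comm
  have hSle2 : S ≤ p2 w := by
    rw [hc2, hS']
    apply Finset.sum_le_sum
    intro a2 _
    rw [← hcol (Fin.snoc w a2), hsum (fun x => π x (Fin.snoc w a2))]
    exact Finset.single_le_sum
      (f := fun w' => ∑ a1, π (Fin.snoc w' a1) (Fin.snoc w a2))
      (fun w' _ => Finset.sum_nonneg fun a1 _ => hnn _ _) (Finset.mem_univ w)
  have hblock : S = min (p1 w) (p2 w) := by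
    refine le_antisymm (le_min hSle1 hSle2) ?_
    by_contra hlt
    push_neg at hlt
    have hl1 : S < p1 w := lt_of_lt_of_le hlt (min_le_left _ _)
    have hl2 : S < p2 w := lt_of_lt_of_le hlt (min_le_right _ _)
    have hex1 : ∃ (a1 : A) (y : Fin (n+1) → A), Fin.init y ≠ w ∧ 0 < π (Fin.snoc w a1) y := by
      by_contra hno
      push_neg at hno
      have : p1 w = S := by
        rw [hc1, hS]
        apply Finset.sum_congr rfl
        intro a1 _
        rw [← hrow (Fin.snoc w a1), hsum (π (Fin.snoc w a1))]
        apply Finset.sum_eq_single w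
        · intro w' _ hw'
          apply Finset.sum_eq_zero
          intro a2 _
          refine le_antisymm (hno a1 (Fin.snoc w' a2) ?_) (hnn _ _)
          rw [Fin.init_snoc]; exact hw'
        · intro h; exact absurd (Finset.mem_univ w) h
      linarith
    have hex2 : ∃ (a2 : A) (y' : Fin (n+1) → A), Fin.init y' ≠ w ∧ 0 < π y' (Fin.snoc w a2) := by
      by_contra hno
      push_neg at hno
      have : p2 w = S := by
        rw [hc2, hS']
        apply Finset.sum_congr rfl
        intro a2 _
        rw [← hcol (Fin.snoc w a2), hsum (fun x => π x (Fin.snoc w a2))]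
        apply Finset.sum_eq_single w
        · intro w' _ hw'
          apply Finset.sum_eq_zero
          intro a1 _
          refine le_antisymm (hno a2 (Fin.snoc w' a1) ?_) (hnn _ _)
          rw [Fin.init_snoc]; exact hw'
        · intro h; exact absurd (Finset.mem_univ w) h
      linarith
    obtain ⟨a1, y, hy, hpy⟩ := hex1
    obtain ⟨a2, y', hy', hpy'⟩ := hex2
    have hcm := cm (Fin.snoc w a1) y y' (Fin.snoc w a2) hpy hpy'
    have hA := hfar1 a1 y hy
    have hB := hfar2 a2 y' hy'
    have hD := hhalf a1 a2
    have hD' := hhalf a2 a1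
    have hu1 := cantorDist_ultra y' (Fin.snoc w a2 : Fin (n+1) → A) y
    have hu2 := cantorDist_ultra (Fin.snoc w a2 : Fin (n+1) → A) (Fin.snoc w a1) y
    have hpow : ((1:ℝ)/2)^(n+1) = ((1:ℝ)/2)^n * (1/2) := pow_succ _ _
    have hpown : (0:ℝ) < ((1:ℝ)/2)^n := by positivity
    have hmax2 : cantorDist (Fin.snoc w a2 : Fin (n+1) → A) y ≤
        cantorDist (Fin.snoc w a1 : Fin (n+1) → A) y :=
      le_trans hu2 (max_le (by linarith) le_rfl)
    have hmax1 : cantorDist y' y ≤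
        max (cantorDist y' (Fin.snoc w a2 : Fin (n+1) → A))
          (cantorDist (Fin.snoc w a1 : Fin (n+1) → A) y) :=
      le_trans hu1 (max_le (le_max_left _ _) (le_trans hmax2 (le_max_right _ _)))
    have hfin : max (cantorDist y' (Fin.snoc w a2 : Fin (n+1) → A))
        (cantorDist (Fin.snoc w a1 : Fin (n+1) → A) y) ≤
        cantorDist y' (Fin.snoc w a2) + cantorDist (Fin.snoc w a1) y - ((1:ℝ)/2)^n :=
      max_le (by linarith) (by linarith)
    linarith
  -- put everything together
  have hpt : ∀ a1 a2 : A, (if a1 ≠ a2 then π (Fin.snoc w a1) (Fin.snoc w a2) else 0)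
      = π (Fin.snoc w a1) (Fin.snoc w a2)
        - (if a1 = a2 then π (Fin.snoc w a1) (Fin.snoc w a2) else 0) := by
    intro a1 a2; by_cases h : a1 = a2 <;> simp [h]
  simp_rw [hpt, Finset.sum_sub_distrib, Finset.sum_ite_eq, Finset.mem_univ, if_true]
  rw [← hS, hblock]
  congr 1
  exact Finset.sum_congr rfl fun a _ => diag (Fin.snoc w a)
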